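/- Let (Ω, F, P) be a probability space, S ⊆ ℝⁿ a bounded domain, and O ⊆ Ω a measurable set with P(O) < 1. If f₀ ∈ L²(S) (viewed as an element of L²(S × Ω) constant in ω) and f₁ ∈ L²(S × Ω) vanishes a.e. on S × (Ω \ O), then ‖f₀‖_{L²(S)} + ‖f₁‖_{L²(S×Ω)} ≤ C ‖f₀ + f₁‖_{L²(S×Ω)} with a constant C depending only on P(O); more precisely, ‖f₁‖²_{L²(S×Ω)} ≤ (1 − P(O))⁻¹ ‖f₀+f₁‖²_{L²(S×Ω)} and ‖f₀‖²_{L²(S)} ≤ 2(2 − P(O))(1 − P(O))⁻¹ ‖f₀+f₁‖²_{L²(S×Ω)}. -/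

import Mathlib

open MeasureTheory
open scoped ENNReal

private lemma sq_sub_le (l s a : ℝ) (hl : 0 < l) :
    (s - a)^2 ≤ (1+l)*s^2 + (1+l⁻¹)*a^2 := by
  rw [← sub_nonneg]
  have h : (1+l)*s^2 + (1+l⁻¹)*a^2 - (s-a)^2 = (l*s+a)^2 / l := by
    field_simp; ring
  rw [h]; positivity

private lemma nsq_eq (t : ℝ) : (‖t‖₊ : ℝ≥0∞)^2 = ENNReal.ofReal (t^2) := by
  rw [← enorm_eq_nnnorm, ← ofReal_norm, ← ENNReal.ofReal_pow (norm_nonneg t)]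
  congr 1
  rw [Real.norm_eq_abs, sq_abs]

private lemma sq_eLpNorm {α : Type*} [MeasurableSpace α] (μ : Measure α) (f : α → ℝ) :
    eLpNorm f 2 μ ^ 2 = ∫⁻ a, (‖f a‖₊ : ℝ≥0∞) ^ 2 ∂μ := by
  rw [eLpNorm_eq_lintegral_rpow_enorm_toReal two_ne_zero ENNReal.ofNat_ne_top]
  rw [← ENNReal.rpow_natCast _ 2, ← ENNReal.rpow_mul]
  norm_num
  rfl

private lemma pow_le_pow_rev {x y : ℝ≥0∞} (h : x^2 ≤ y^2) : x ≤ y := by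
  by_contra hc
  push_neg at hc
  exact absurd h (not_le.mpr (ENNReal.pow_lt_pow_left two_ne_zero hc))

theorem stmt0 {n : ℕ} (S : Set (EuclideanSpace ℝ (Fin n)))
    (hSopen : IsOpen S) (hSbdd : Bornology.IsBounded S) (hSne : S.Nonempty)
    {Ω : Type*} [MeasurableSpace Ω] (P : Measure Ω) [IsProbabilityMeasure P]
    (O : Set Ω) (hO : MeasurableSet O) (hOlt : P O < 1)
    (f₀ : EuclideanSpace ℝ (Fin n) → ℝ) (f₁ : EuclideanSpace ℝ (Fin n) × Ω → ℝ)
    (hf₀ : MemLp f₀ 2 (volume.restrict S))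
    (hf₁ : MemLp f₁ 2 ((volume.restrict S).prod P))
    (hvanish : ∀ᵐ p ∂((volume.restrict S).prod P), p.2 ∉ O → f₁ p = 0) :
    eLpNorm f₁ 2 ((volume.restrict S).prod P) ^ 2
        ≤ (1 - P O)⁻¹ *
          eLpNorm (fun p => f₀ p.1 + f₁ p) 2 ((volume.restrict S).prod P) ^ 2 ∧
    eLpNorm f₀ 2 (volume.restrict S) ^ 2
        ≤ (2 * (2 - P O)) * (1 - P O)⁻¹ *
          eLpNorm (fun p => f₀ p.1 + f₁ p) 2 ((volume.restrict S).prod P) ^ 2 ∧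
    ∃ C : ℝ≥0∞, C < ⊤ ∧
      eLpNorm f₀ 2 (volume.restrict S) + eLpNorm f₁ 2 ((volume.restrict S).prod P)
        ≤ C * eLpNorm (fun p => f₀ p.1 + f₁ p) 2 ((volume.restrict S).prod P) := by
  set μ := volume.restrict S with hμdef
  set ν := μ.prod P with hνdef
  set g : EuclideanSpace ℝ (Fin n) × Ω → ℝ := fun p => f₀ p.1 + f₁ p with hgdef
  set q := P O with hqdef
  -- basic facts about q and c
  have hqle : q ≤ 1 := hOlt.le
  have hq_top : q ≠ ∞ := (hOlt.trans ENNReal.one_lt_top).ne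
  have h1q_ne : (1 : ℝ≥0∞) - q ≠ 0 := by
    rw [Ne, tsub_eq_zero_iff_le]
    exact hOlt.not_ge
  have h1q_top : (1 : ℝ≥0∞) - q ≠ ∞ :=
    (tsub_le_self.trans_lt ENNReal.one_lt_top).ne
  set c : ℝ≥0∞ := (1 - q)⁻¹ with hcdef
  have hc_top : c ≠ ∞ := ENNReal.inv_ne_top.mpr h1q_ne
  have hc_ne : c ≠ 0 := ENNReal.inv_ne_zero.mpr h1q_top
  have hc_one : 1 ≤ c := by
    rw [hcdef]
    simpa using ENNReal.inv_le_inv' (tsub_le_self : (1:ℝ≥0∞) - q ≤ 1)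
  have hcmul : (1 - q) * c = 1 := ENNReal.mul_inv_cancel h1q_ne h1q_top
  -- measurability
  have hsm0 : AEStronglyMeasurable (fun p : EuclideanSpace ℝ (Fin n) × Ω => f₀ p.1) ν :=
    hf₀.aestronglyMeasurable.comp_fst
  have hsmg : AEStronglyMeasurable g ν := hsm0.add hf₁.aestronglyMeasurable
  have hNg : AEMeasurable (fun p => (‖g p‖₊ : ℝ≥0∞)^2) ν := hsmg.enorm.pow_const 2
  set T : Set (EuclideanSpace ℝ (Fin n) × Ω) := Prod.snd ⁻¹' O with hTdef
  have hT : MeasurableSet T := measurable_snd hO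
  -- abbreviations
  set A := ∫⁻ x, (‖f₀ x‖₊ : ℝ≥0∞)^2 ∂μ with hAdef
  set G := ∫⁻ p, (‖g p‖₊ : ℝ≥0∞)^2 ∂ν with hGdef
  set F1 := ∫⁻ p, (‖f₁ p‖₊ : ℝ≥0∞)^2 ∂ν with hF1def
  -- the key product computation
  have key : ∀ E : Set Ω, MeasurableSet E →
      ∫⁻ p in Prod.snd ⁻¹' E, (‖f₀ p.1‖₊ : ℝ≥0∞)^2 ∂ν = P E * A := by
    intro E hE
    have h1 : ν.restrict (Prod.snd ⁻¹' E) = μ.prod (P.restrict E) := by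
      rw [← Set.univ_prod, ← Measure.prod_restrict, Measure.restrict_univ]
    have ha : AEMeasurable (fun x => (‖f₀ x‖₊ : ℝ≥0∞)^2) μ :=
      hf₀.aestronglyMeasurable.enorm.pow_const 2
    rw [h1, MeasureTheory.lintegral_prod _ (ha.comp_fst)]
    simp_rw [lintegral_const, Measure.restrict_apply_univ]
    rw [lintegral_mul_const' (P E) _ (measure_ne_top P E), mul_comm]
  -- vanishing of f₁ off T
  have hvr : ∀ᵐ p ∂ν.restrict Tᶜ, f₁ p = 0 := by
    filter_upwards [ae_restrict_of_ae hvanish, ae_restrict_mem hT.compl] with p h1 h2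
    exact h1 h2
  -- ∫ over Tᶜ of ‖g‖² equals (1-q) A
  have hGc : ∫⁻ p in Tᶜ, (‖g p‖₊ : ℝ≥0∞)^2 ∂ν = (1 - q) * A := by
    have h2 : ∫⁻ p in Tᶜ, (‖g p‖₊ : ℝ≥0∞)^2 ∂ν
        = ∫⁻ p in Tᶜ, (‖f₀ p.1‖₊ : ℝ≥0∞)^2 ∂ν := by
      refine lintegral_congr_ae (hvr.mono fun p hp => ?_)
      simp [hgdef, hp]
    have h3 : Tᶜ = Prod.snd ⁻¹' Oᶜ := rfl
    rw [h2, h3, key Oᶜ hO.compl, prob_compl_eq_one_sub hO]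
  -- A ≤ c * G
  have hGsplit : G = ∫⁻ p in T, (‖g p‖₊ : ℝ≥0∞)^2 ∂ν + (1 - q) * A := by
    rw [hGdef, ← lintegral_add_compl _ hT, hGc]
  have hA_le : A ≤ c * G := by
    have h1 : (1 - q) * A ≤ G := by
      rw [hGsplit]; exact le_add_self
    calc A = c * ((1 - q) * A) := by
          rw [← mul_assoc, mul_comm c (1 - q), hcmul, one_mul]
      _ ≤ c * G := mul_le_mul_right h1 c
  -- F1 localizes to T
  have hF1T : F1 = ∫⁻ p in T, (‖f₁ p‖₊ : ℝ≥0∞)^2 ∂ν := by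
    have h0 : ∫⁻ p in Tᶜ, (‖f₁ p‖₊ : ℝ≥0∞)^2 ∂ν = 0 := by
      have hz : (fun p => (‖f₁ p‖₊ : ℝ≥0∞)^2) =ᵐ[ν.restrict Tᶜ] (fun _ => 0) :=
        hvr.mono fun p hp => by simp [hp]
      rw [lintegral_congr_ae hz, lintegral_zero]
    rw [hF1def, ← lintegral_add_compl _ hT, h0, add_zero]
  -- main estimate: F1 ≤ c * G
  have hF1_le : F1 ≤ c * G := by
    rcases eq_or_ne q 0 with hq0 | hq0
    · have hT0 : ν T = 0 := by
        rw [hTdef, ← Set.univ_prod, hνdef, Measure.prod_prod, ← hqdef, hq0, mul_zero]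
      rw [hF1T, setLIntegral_measure_zero _ _ hT0]
      exact zero_le
    · set lam : ℝ≥0∞ := q * c with hlamdef
      have hlam_ne : lam ≠ 0 := mul_ne_zero hq0 hc_ne
      have hlam_top : lam ≠ ∞ := ENNReal.mul_ne_top hq_top hc_top
      set l : ℝ := lam.toReal with hldef
      have hl : 0 < l := ENNReal.toReal_pos hlam_ne hlam_top
      have hofl : ENNReal.ofReal l = lam := ENNReal.ofReal_toReal hlam_top
      have h1lam : 1 + lam = c := by
        rw [hlamdef, ← hcmul, ← add_mul, tsub_add_cancel_of_le hqle, one_mul]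
      have h2lam : (1 + lam⁻¹) * q = 1 := by
        have hinv : lam⁻¹ = q⁻¹ * (1 - q) := by
          rw [hlamdef, ENNReal.mul_inv (Or.inl hq0) (Or.inl hq_top), hcdef, inv_inv]
        rw [hinv, add_mul, one_mul, mul_comm (q⁻¹ * (1 - q)) q, ← mul_assoc,
          ENNReal.mul_inv_cancel hq0 hq_top, one_mul, add_tsub_cancel_of_le hqle]
      have h1lam_top : (1 : ℝ≥0∞) + lam ≠ ∞ := by
        rw [h1lam]; exact hc_top
      have h2lam_top : (1 : ℝ≥0∞) + lam⁻¹ ≠ ∞ := by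
        refine ENNReal.add_ne_top.mpr ⟨ENNReal.one_ne_top, ENNReal.inv_ne_top.mpr hlam_ne⟩
      -- pointwise bound
      have hpt : ∀ p, (‖f₁ p‖₊ : ℝ≥0∞)^2
          ≤ (1 + lam) * (‖g p‖₊ : ℝ≥0∞)^2 + (1 + lam⁻¹) * (‖f₀ p.1‖₊ : ℝ≥0∞)^2 := by
        intro p
        rw [nsq_eq, nsq_eq, nsq_eq]
        have hf1 : f₁ p = g p - f₀ p.1 := by simp [hgdef]
        rw [hf1]
        calc ENNReal.ofReal ((g p - f₀ p.1)^2)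
            ≤ ENNReal.ofReal ((1+l)*(g p)^2 + (1+l⁻¹)*(f₀ p.1)^2) :=
              ENNReal.ofReal_le_ofReal (sq_sub_le l (g p) (f₀ p.1) hl)
          _ = (1 + lam) * ENNReal.ofReal ((g p)^2)
              + (1 + lam⁻¹) * ENNReal.ofReal ((f₀ p.1)^2) := by
              rw [ENNReal.ofReal_add (by positivity) (by positivity),
                ENNReal.ofReal_mul (by positivity), ENNReal.ofReal_mul (by positivity),
                ENNReal.ofReal_add zero_le_one hl.le,
                ENNReal.ofReal_add zero_le_one (inv_nonneg.mpr hl.le),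
                ENNReal.ofReal_one, ENNReal.ofReal_inv_of_pos hl, hofl]
      have hmeas1 : AEMeasurable
          (fun p => (1 + lam) * (‖g p‖₊ : ℝ≥0∞)^2) (ν.restrict T) :=
        (hNg.restrict).const_mul _
      calc F1 = ∫⁻ p in T, (‖f₁ p‖₊ : ℝ≥0∞)^2 ∂ν := hF1T
        _ ≤ ∫⁻ p in T, ((1 + lam) * (‖g p‖₊ : ℝ≥0∞)^2
              + (1 + lam⁻¹) * (‖f₀ p.1‖₊ : ℝ≥0∞)^2) ∂ν := lintegral_mono hpt
        _ = (1 + lam) * ∫⁻ p in T, (‖g p‖₊ : ℝ≥0∞)^2 ∂ν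
              + (1 + lam⁻¹) * ∫⁻ p in T, (‖f₀ p.1‖₊ : ℝ≥0∞)^2 ∂ν := by
            rw [lintegral_add_left' hmeas1, lintegral_const_mul' _ _ h1lam_top,
              lintegral_const_mul' _ _ h2lam_top]
        _ = c * ∫⁻ p in T, (‖g p‖₊ : ℝ≥0∞)^2 ∂ν + A := by
            rw [h1lam, key O hO, ← mul_assoc, h2lam, one_mul]
        _ ≤ c * ∫⁻ p in T, (‖g p‖₊ : ℝ≥0∞)^2 ∂ν + c * ((1 - q) * A) := by
            gcongr
            rw [← mul_assoc, mul_comm c (1 - q), hcmul, one_mul]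
        _ = c * G := by rw [← mul_add, hGsplit]
  -- conclusions
  have e0 : eLpNorm f₀ 2 μ ^ 2 = A := sq_eLpNorm μ f₀
  have e1 : eLpNorm f₁ 2 ν ^ 2 = F1 := sq_eLpNorm ν f₁
  have eg : eLpNorm g 2 ν ^ 2 = G := sq_eLpNorm ν g
  refine ⟨?_, ?_, ?_⟩
  · rw [e1, eg]; exact hF1_le
  · rw [e0, eg]
    have h21 : (1 : ℝ≥0∞) ≤ 2 * (2 - q) := by
      have h1 : (1 : ℝ≥0∞) ≤ 2 - q := by
        refine ENNReal.le_sub_of_add_le_right hq_top ?_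
        calc (1 : ℝ≥0∞) + q ≤ 1 + 1 := add_le_add_right hqle 1
          _ = 2 := one_add_one_eq_two
      calc (1 : ℝ≥0∞) ≤ 2 - q := h1
        _ = 1 * (2 - q) := (one_mul _).symm
        _ ≤ 2 * (2 - q) := mul_le_mul_left one_le_two _
    calc A ≤ c * G := hA_le
      _ = 1 * (c * G) := (one_mul _).symm
      _ ≤ (2 * (2 - q)) * (c * G) := mul_le_mul_left h21 _
      _ = 2 * (2 - q) * c * G := by ring
  · refine ⟨2 * c, ?_, ?_⟩
    · exact ENNReal.mul_lt_top (by norm_num) (lt_top_iff_ne_top.mpr hc_top)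
    · have hb0 : eLpNorm f₀ 2 μ ≤ c * eLpNorm g 2 ν := by
        refine pow_le_pow_rev ?_
        rw [mul_pow, e0, eg]
        calc A ≤ c * G := hA_le
          _ = (1 * c) * G := by rw [one_mul]
          _ ≤ (c * c) * G := mul_le_mul_left (mul_le_mul_left hc_one c) G
          _ = c ^ 2 * G := by rw [sq]
      have hb1 : eLpNorm f₁ 2 ν ≤ c * eLpNorm g 2 ν := by
        refine pow_le_pow_rev ?_
        rw [mul_pow, e1, eg]
        calc F1 ≤ c * G := hF1_le
          _ = (1 * c) * G := by rw [one_mul]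
          _ ≤ (c * c) * G := mul_le_mul_left (mul_le_mul_left hc_one c) G
          _ = c ^ 2 * G := by rw [sq]
      calc eLpNorm f₀ 2 μ + eLpNorm f₁ 2 ν
          ≤ c * eLpNorm g 2 ν + c * eLpNorm g 2 ν := by gcongr
        _ = 2 * c * eLpNorm g 2 ν := by ring
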